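/- arXiv:2009.10629 — 8 statements merged into one kernel-verified Lean document; each statement's English description precedes it below -/
import Mathlib

section
/- Let (α_k)_{k≥1} be a sequence of positive real numbers with α_1 ≤ 1 and α_{k+1} ≤ 2/(1 + √(1 + 4/α_k²)) for all k ≥ 1. Then α_k ≤ 2/(k+1) for all k ≥ 1. -/
theorem stmt_0 (α : ℕ → ℝ)
    (hpos : ∀ k ≥ 1, 0 < α k)
    (h1 : α 1 ≤ 1)
    (hrec : ∀ k ≥ 1, α (k + 1) ≤ 2 / (1 + Real.sqrt (1 + 4 / (α k) ^ 2))) :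
    ∀ k ≥ 1, α k ≤ 2 / ((k : ℝ) + 1) := by
  intro k hk
  induction k with
  | zero => omega
  | succ n ih =>
    rcases Nat.eq_or_lt_of_le hk with h | h
    · simp at h
      subst h
      norm_num
      linarith
    · have hn1 : n ≥ 1 := by omega
      have ihn := ih hn1
      have hαpos := hpos n hn1
      -- α n ≤ 2/(n+1), so 4/αn² ≥ (n+1)²
      have hnpos : (0:ℝ) < (n:ℝ) + 1 := by positivity
      have hsq : (α n)^2 ≤ (2 / ((n:ℝ)+1))^2 := by
        apply pow_le_pow_left₀ hαpos.le ihn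
      have h2 : ((n:ℝ)+1)^2 ≤ 4 / (α n)^2 := by
        rw [le_div_iff₀ (by positivity)]
        have heq : (2 / ((n:ℝ)+1))^2 = 4 / ((n:ℝ)+1)^2 := by
          field_simp; ring
        rw [heq, le_div_iff₀ (by positivity)] at hsq
        nlinarith [hsq]
      have hsqrt : (n:ℝ) + 1 ≤ Real.sqrt (1 + 4 / (α n)^2) := by
        rw [show (n:ℝ)+1 = Real.sqrt (((n:ℝ)+1)^2) by
          rw [Real.sqrt_sq hnpos.le]]
        apply Real.sqrt_le_sqrt
        linarith
      calc α (n+1) ≤ 2 / (1 + Real.sqrt (1 + 4 / (α n)^2)) := hrec n hn1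
        _ ≤ 2 / (((n:ℝ)+1) + 1) := by
            apply div_le_div_of_nonneg_left (by norm_num) (by linarith) (by linarith)
        _ = 2 / ((↑(n+1):ℝ) + 1) := by push_cast; ring
end

section
/- Define the damping sequence (α_k)_{k≥1} of real numbers by α_1 = 1 and α_{k+1} = 2/(1 + √(1 + 4/α_k²)) for all k ≥ 1. Let a > 0 and 0 < b < 1 be real numbers satisfying (1) a·2^{−b} > √5 − 2 and (2) a(1−b)·2^{2−b} − ab(1−b)·2^{−b} − 1 ≥ 0. Then for all k ≥ 1, 2/((1 + a·k^{−b})k + 1) < α_k ≤ 2/(k + 1). -/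
open Real

lemma concave_step {b u : ℝ} (hb0 : 0 < b) (hb1 : b < 1) (hu : 1 ≤ u) :
    (1 - b) * u ^ (-b) ≤ u ^ (1 - b) - (u - 1) ^ (1 - b) := by
  have hu0 : 0 < u := lt_of_lt_of_le one_pos hu
  have hinv : 1/u ≤ 1 := by rw [div_le_one hu0]; exact hu
  have hB : (1 + (-(1/u))) ^ (1-b) ≤ 1 + (1-b) * (-(1/u)) :=
    rpow_one_add_le_one_add_mul_self (by linarith) (by linarith) (by linarith)
  have h1 : (0:ℝ) ≤ 1 + (-(1/u)) := by linarith
  have hmul : ((1 + (-(1/u))) * u) ^ (1-b) = (1 + (-(1/u))) ^ (1-b) * u ^ (1-b) :=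
    Real.mul_rpow h1 hu0.le
  have heq : (1 + (-(1/u))) * u = u - 1 := by field_simp; ring
  have h2 : (u - 1) ^ (1-b) ≤ (1 + (1-b) * (-(1/u))) * u ^ (1-b) := by
    rw [← heq, hmul]
    exact mul_le_mul_of_nonneg_right hB (Real.rpow_nonneg hu0.le _)
  have h3 : u ^ (1-b) = u ^ (-b) * u := by
    rw [show (1:ℝ) - b = -b + 1 by ring, Real.rpow_add hu0, Real.rpow_one]
  rw [h3] at h2 ⊢
  have : (1 + (1 - b) * (-(1/u))) * (u ^ (-b) * u)
      = u ^ (-b) * u - (1-b) * u ^ (-b) := by field_simp; ring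
  linarith [this ▸ h2]

lemma key_ineq (a b K : ℝ) (ha : 0 < a) (hb0 : 0 < b) (hb1 : b < 1)
    (hcond2 : a * (1 - b) * (2 : ℝ) ^ (2 - b) - a * b * (1 - b) * (2 : ℝ) ^ (-b) - 1 ≥ 0)
    (hK : 1 ≤ K) :
    1 + ((1 + a * K ^ (-b)) * K + 1) ^ 2 ≤ ((1 + a * (K+1) ^ (-b)) * (K+1)) ^ 2 := by
  have hK0 : 0 < K := lt_of_lt_of_le one_pos hK
  have hu0 : 0 < K + 1 := by linarith
  set u : ℝ := K + 1 with hu_def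
  have hu2 : 2 ≤ u := by simp [hu_def]; linarith
  set p : ℝ := a * K ^ (1-b) with hp_def
  set q : ℝ := a * u ^ (1-b) with hq_def
  have hKe : K ^ (1-b) = K ^ (-b) * K := by
    rw [show (1:ℝ) - b = -b + 1 by ring, Real.rpow_add hK0, Real.rpow_one]
  have hue : u ^ (1-b) = u ^ (-b) * u := by
    rw [show (1:ℝ) - b = -b + 1 by ring, Real.rpow_add hu0, Real.rpow_one]
  have hsk : (1 + a * K ^ (-b)) * K + 1 = u + p := by
    rw [hp_def, hKe, hu_def]; ring
  have hsk1 : (1 + a * u ^ (-b)) * u = u + q := by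
    rw [hq_def, hue]; ring
  rw [hsk, hsk1]
  have hp0 : 0 ≤ p := mul_nonneg ha.le (Real.rpow_nonneg hK0.le _)
  have hq0 : 0 ≤ q := mul_nonneg ha.le (Real.rpow_nonneg hu0.le _)
  -- q - p ≥ a*(1-b)*u^(-b)
  have hcs := concave_step hb0 hb1 (by linarith : (1:ℝ) ≤ u)
  have hqp : a * ((1-b) * u ^ (-b)) ≤ q - p := by
    have : u - 1 = K := by rw [hu_def]; ring
    rw [this] at hcs
    rw [hp_def, hq_def, ← mul_sub]
    exact mul_le_mul_of_nonneg_left hcs ha.le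
  -- 2*a*(1-b)*u^(1-b) ≥ a*(1-b)*2^(2-b) ≥ 1
  have hmono : (2:ℝ) ^ (1-b) ≤ u ^ (1-b) :=
    Real.rpow_le_rpow (by norm_num) hu2 (by linarith)
  have h22 : (2:ℝ) ^ (2-b) = 2 * (2:ℝ) ^ (1-b) := by
    rw [show (2:ℝ) - b = 1 + (1-b) by ring, Real.rpow_add (by norm_num), Real.rpow_one]
  have hpos2 : 0 < a * b * (1 - b) * (2 : ℝ) ^ (-b) :=
    mul_pos (mul_pos (mul_pos ha hb0) (by linarith)) (Real.rpow_pos_of_pos two_pos _)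
  have h1le : 1 ≤ 2 * (a * (1-b)) * u ^ (1-b) := by
    have : a * (1-b) * (2:ℝ) ^ (2-b) ≥ 1 := by linarith
    rw [h22] at this
    have hmul : 2 * (a * (1-b)) * (2:ℝ)^(1-b) ≤ 2 * (a * (1-b)) * u ^ (1-b) :=
      mul_le_mul_of_nonneg_left hmono (by nlinarith)
    nlinarith
  -- so (q-p)*(2u) ≥ 1
  have h5 : 1 ≤ (q - p) * (2 * u) := by
    have : a * ((1-b) * u ^ (-b)) * (2 * u) ≤ (q - p) * (2 * u) :=
      mul_le_mul_of_nonneg_right hqp (by linarith)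
    have he : a * ((1-b) * u ^ (-b)) * (2 * u) = 2 * (a * (1-b)) * (u ^ (-b) * u) := by ring
    rw [he, ← hue] at this
    linarith
  nlinarith [mul_nonneg (by linarith [hqp, mul_nonneg (mul_nonneg ha.le (by linarith : (0:ℝ) ≤ 1-b)) (Real.rpow_nonneg hu0.le (-b))] : (0:ℝ) ≤ q - p) (by linarith : (0:ℝ) ≤ p + q)]

theorem stmt_1 (α : ℕ → ℝ)
    (h1 : α 1 = 1)
    (hrec : ∀ k ≥ 1, α (k + 1) = 2 / (1 + Real.sqrt (1 + 4 / (α k) ^ 2)))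
    (a b : ℝ) (ha : 0 < a) (hb0 : 0 < b) (hb1 : b < 1)
    (hcond1 : a * (2 : ℝ) ^ (-b) > Real.sqrt 5 - 2)
    (hcond2 : a * (1 - b) * (2 : ℝ) ^ (2 - b) - a * b * (1 - b) * (2 : ℝ) ^ (-b) - 1 ≥ 0) :
    ∀ k : ℕ, k ≥ 1 → 2 / ((1 + a * (k : ℝ) ^ (-b)) * (k : ℝ) + 1) < α k ∧ α k ≤ 2 / ((k : ℝ) + 1) := by
  intro k hk
  induction k, hk using Nat.le_induction with
  | base =>
    rw [h1]
    push_cast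
    rw [Real.one_rpow]
    constructor
    · rw [div_lt_one (by linarith)]; linarith
    · norm_num
  | succ k hk ih =>
    obtain ⟨ihl, ihu⟩ := ih
    have hK1 : (1:ℝ) ≤ (k:ℝ) := by exact_mod_cast hk
    set K : ℝ := (k:ℝ) with hKdef
    have hK0 : 0 < K := by linarith
    have hrp : 0 < K ^ (-b) := Real.rpow_pos_of_pos hK0 _
    have hskpos : 0 < (1 + a * K ^ (-b)) * K + 1 := by nlinarith [mul_pos (mul_pos ha hrp) hK0]
    have hxpos : 0 < α k := lt_trans (div_pos two_pos hskpos) ihl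
    have hx2 : 0 < (α k) ^ 2 := by positivity
    have hS0 : 0 ≤ Real.sqrt (1 + 4 / (α k) ^ 2) := Real.sqrt_nonneg _
    rw [hrec k hk]
    push_cast
    have hTp : 0 < (1 + a * (K+1) ^ (-b)) * (K+1) := by
      have h := Real.rpow_pos_of_pos (by linarith : (0:ℝ) < K + 1) (-b)
      nlinarith [mul_pos (mul_pos ha h) (by linarith : (0:ℝ) < K + 1)]
    constructor
    · -- lower bound
      have h2s : (2 / ((1 + a * K ^ (-b)) * K + 1)) ^ 2 < (α k) ^ 2 :=
        pow_lt_pow_left₀ ihl (le_of_lt (div_pos two_pos hskpos)) two_ne_zero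
      rw [div_pow] at h2s
      have h4a : (4:ℝ) < (α k) ^ 2 * ((1 + a * K ^ (-b)) * K + 1) ^ 2 := by
        have := (div_lt_iff₀ (pow_pos hskpos 2)).mp (by norm_num at h2s ⊢; exact h2s)
        linarith
      have h4 : 4 / (α k) ^ 2 < ((1 + a * K ^ (-b)) * K + 1) ^ 2 := by
        rw [div_lt_iff₀ hx2]; nlinarith
      have hkey := key_ineq a b K ha hb0 hb1 hcond2 hK1
      have hlt : 1 + 4 / (α k) ^ 2 < ((1 + a * (K+1) ^ (-b)) * (K+1)) ^ 2 := by linarith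
      have hs : Real.sqrt (1 + 4 / (α k) ^ 2) < (1 + a * (K+1) ^ (-b)) * (K+1) := by
        have h := Real.sqrt_lt_sqrt (by positivity) hlt
        rwa [Real.sqrt_sq hTp.le] at h
      exact div_lt_div_of_pos_left two_pos (by linarith) (by linarith)
    · -- upper bound
      have hmul : α k * (K + 1) ≤ 2 := (le_div_iff₀ (by linarith)).mp ihu
      have h4b : (K + 1) ^ 2 ≤ 4 / (α k) ^ 2 := by
        rw [le_div_iff₀ hx2]
        have h := mul_le_mul hmul hmul (by positivity) (by norm_num)
        nlinarith [h]
      have hs : K + 1 ≤ Real.sqrt (1 + 4 / (α k) ^ 2) := by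
        rw [show K + 1 = Real.sqrt ((K+1)^2) from (Real.sqrt_sq (by linarith)).symm]
        exact Real.sqrt_le_sqrt (by linarith)
      have h1S : 0 < 1 + Real.sqrt (1 + 4 / (α k) ^ 2) := by linarith
      rw [div_le_div_iff₀ h1S (by linarith : (0:ℝ) < K + 1 + 1)]
      nlinarith
end

section
/- Define the damping sequence (α_k)_{k≥1} of real numbers by α_1 = 1 and α_{k+1} = 2/(1 + √(1 + 4/α_k²)) for all k ≥ 1. Then for all k ≥ 1, 2/((1 + k^{−1/2})k + 1) < α_k ≤ 2/(k + 1). -/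
lemma key_ineq_s2 (N : ℝ) (hN : 1 ≤ N) :
    1 + (N + Real.sqrt N + 1) ^ 2 ≤ (N + 1 + Real.sqrt (N + 1)) ^ 2 := by
  have hs : Real.sqrt N ^ 2 = N := Real.sq_sqrt (by linarith)
  have ht : Real.sqrt (N + 1) ^ 2 = N + 1 := Real.sq_sqrt (by linarith)
  have hst : Real.sqrt N ≤ Real.sqrt (N + 1) := Real.sqrt_le_sqrt (by linarith)
  have hs0 : 0 ≤ Real.sqrt N := Real.sqrt_nonneg _
  nlinarith [hst, hs0]

lemma aux (α : ℕ → ℝ)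
    (h1 : α 1 = 1)
    (hrec : ∀ k ≥ 1, α (k + 1) = 2 / (1 + Real.sqrt (1 + 4 / (α k) ^ 2))) :
    ∀ k : ℕ, k ≥ 1 → 2 / ((k : ℝ) + Real.sqrt k + 1) < α k ∧ α k ≤ 2 / ((k : ℝ) + 1) := by
  intro k hk
  induction k with
  | zero => omega
  | succ n ih =>
    rcases Nat.lt_or_ge n 1 with h | h
    · -- n = 0 case : k = 1
      have hn0 : n = 0 := by omega
      subst hn0
      norm_num [h1, Real.sqrt_one]
    · have hn1 : 1 ≤ n := by omega
      obtain ⟨hl, hu⟩ := ih hn1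
      set N : ℝ := (n : ℝ) with hNdef
      have hN1 : (1 : ℝ) ≤ N := by rw [hNdef]; exact_mod_cast hn1
      have hs0 : 0 ≤ Real.sqrt N := Real.sqrt_nonneg _
      have ht0 : 0 ≤ Real.sqrt (N + 1) := Real.sqrt_nonneg _
      have hden : 0 < N + Real.sqrt N + 1 := by linarith
      have hx0 : 0 < α n := lt_trans (by positivity) hl
      set x := α n with hxdef
      have hx2 : (0:ℝ) < x ^ 2 := by positivity
      -- upper bound consequences
      have hxu : x * (N + 1) ≤ 2 := by
        rw [le_div_iff₀ (by linarith)] at hu; linarith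
      have h4u : (N + 1) ^ 2 ≤ 4 / x ^ 2 := by
        rw [le_div_iff₀ hx2]
        nlinarith [hxu, mul_pos hx0 (show (0:ℝ) < N + 1 by linarith)]
      -- lower bound consequences
      have hxl : 2 < x * (N + Real.sqrt N + 1) := by
        rw [div_lt_iff₀ hden] at hl; linarith
      have h4l : 4 / x ^ 2 < (N + Real.sqrt N + 1) ^ 2 := by
        rw [div_lt_iff₀ hx2]
        nlinarith [hxl, hx0, hden]
      have hrecn := hrec n hn1
      rw [← hxdef] at hrecn
      set S := Real.sqrt (1 + 4 / x ^ 2) with hSdef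
      have hS0 : 0 ≤ S := Real.sqrt_nonneg _
      -- S ≥ N + 1
      have hSl : N + 1 ≤ S := by
        rw [hSdef, show N + 1 = Real.sqrt ((N+1)^2) by rw [Real.sqrt_sq (by linarith)]]
        exact Real.sqrt_le_sqrt (by linarith)
      -- S < N + 1 + sqrt (N+1)
      have hSu : S < N + 1 + Real.sqrt (N + 1) := by
        rw [hSdef]
        have := key_ineq_s2 N hN1
        have h2 : 1 + 4 / x ^ 2 < (N + 1 + Real.sqrt (N + 1)) ^ 2 := by linarith
        calc Real.sqrt (1 + 4 / x ^ 2) < Real.sqrt ((N + 1 + Real.sqrt (N + 1)) ^ 2) := by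
              apply Real.sqrt_lt_sqrt (by positivity) h2
          _ = N + 1 + Real.sqrt (N + 1) := Real.sqrt_sq (by linarith)
      push_cast
      rw [hrecn]
      constructor
      · rw [div_lt_div_iff₀ (by linarith) (by linarith)]
        linarith
      · rw [div_le_div_iff₀ (by linarith) (by linarith)]
        linarith

theorem stmt_2 (α : ℕ → ℝ)
    (h1 : α 1 = 1)
    (hrec : ∀ k ≥ 1, α (k + 1) = 2 / (1 + Real.sqrt (1 + 4 / (α k) ^ 2))) :
    ∀ k : ℕ, k ≥ 1 → 2 / ((1 + (k : ℝ) ^ (-(1 : ℝ) / 2)) * (k : ℝ) + 1) < α k ∧ α k ≤ 2 / ((k : ℝ) + 1) := by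
  intro k hk
  obtain ⟨hl, hu⟩ := aux α h1 hrec k hk
  have hk1 : (1:ℝ) ≤ (k:ℝ) := by exact_mod_cast hk
  have hk0 : (0:ℝ) < (k:ℝ) := by linarith
  have hsk : 0 < Real.sqrt (k:ℝ) := Real.sqrt_pos.mpr hk0
  have hrw : (1 + (k : ℝ) ^ (-(1 : ℝ) / 2)) * (k : ℝ) + 1 = (k : ℝ) + Real.sqrt k + 1 := by
    have h1' : (k : ℝ) ^ (-(1 : ℝ) / 2) = (Real.sqrt (k:ℝ))⁻¹ := by
      rw [show (-(1:ℝ)/2) = -(1/2) by ring, Real.rpow_neg (le_of_lt hk0),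
        ← Real.sqrt_eq_rpow]
    rw [h1']
    have hsq : Real.sqrt (k:ℝ) * Real.sqrt (k:ℝ) = (k:ℝ) := Real.mul_self_sqrt (le_of_lt hk0)
    field_simp
    nlinarith [hsq]
  rw [hrw]
  exact ⟨hl, hu⟩
end

section
/- Define the damping sequence (α_k)_{k≥1} of real numbers by α_1 = 1 and α_{k+1} = 2/(1 + √(1 + 4/α_k²)) for all k ≥ 1. Let a > 0 and 0 < b < 1 be real numbers satisfying (1) a·2^{−b} > √5 − 2 and (2) a(1−b)·2^{2−b} − ab(1−b)·2^{−b} − 1 ≥ 0. Then for all k ≥ 2, α_k ≥ 2/√((1 + a·k^{−b})k·[(1 + a·k^{−b})k + 2]). -/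
open Real

private lemma aux_rpow_split (x : ℝ) (hx : 0 < x) (b : ℝ) :
    x ^ (1 - b) = x * x ^ (-b) := by
  rw [show (1-b) = 1 + (-b) by ring, Real.rpow_add hx, Real.rpow_one]

private lemma aux_bernoulli {b : ℝ} (hb0 : 0 < b) (hb1 : b < 1) {x : ℝ} (hx : 2 ≤ x) :
    (1 - b) * (x + 1) ^ (-b) ≤ (x + 1) ^ (1 - b) - x ^ (1 - b) := by
  have hx0 : (0:ℝ) < x := by linarith
  have hx1 : (0:ℝ) < x + 1 := by linarith
  have hdiv : (0:ℝ) < x / (x + 1) := by positivity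
  have hs : (-1:ℝ) ≤ x / (x + 1) - 1 := by linarith
  have hber := rpow_one_add_le_one_add_mul_self hs (by linarith : (0:ℝ) ≤ 1 - b)
    (by linarith : (1:ℝ) - b ≤ 1)
  rw [show 1 + (x / (x+1) - 1) = x / (x+1) by ring] at hber
  -- x^(1-b) = (x+1)^(1-b) * (x/(x+1))^(1-b)
  have e2 : x ^ (1-b) = (x+1) ^ (1-b) * (x/(x+1)) ^ (1-b) := by
    rw [← Real.mul_rpow hx1.le hdiv.le, mul_div_cancel₀ _ (by linarith : x + 1 ≠ 0)]
  have e1 : (x+1) ^ (1-b) = (x+1) * (x+1) ^ (-b) := aux_rpow_split _ hx1 b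
  have hp : (0:ℝ) < (x+1) ^ (1-b) := Real.rpow_pos_of_pos hx1 _
  have h3 : x ^ (1-b) ≤ (x+1) ^ (1-b) * (1 + (1-b) * (x/(x+1) - 1)) := by
    rw [e2]; exact mul_le_mul_of_nonneg_left hber hp.le
  have e3 : (x+1) ^ (1-b) * (1 + (1-b) * (x/(x+1) - 1))
      = (x+1) ^ (1-b) - (1-b) * (x+1) ^ (-b) := by
    rw [e1]; field_simp; ring
  linarith [e3 ▸ h3]

private lemma aux_const {a b : ℝ} (ha : 0 < a) (hb0 : 0 < b) (hb1 : b < 1)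
    (hcond2 : a * (1 - b) * (2 : ℝ) ^ (2 - b) - a * b * (1 - b) * (2 : ℝ) ^ (-b) - 1 ≥ 0) :
    1 ≤ 2 * a * (1 - b) * (3:ℝ) ^ (1 - b) := by
  have h2b : (0:ℝ) < (2:ℝ) ^ (-b) := Real.rpow_pos_of_pos (by norm_num) _
  have h3b : (0:ℝ) < (3:ℝ) ^ (-b) := Real.rpow_pos_of_pos (by norm_num) _
  have e1 : (2:ℝ) ^ (2 - b) = 4 * (2:ℝ) ^ (-b) := by
    rw [show (2:ℝ) - b = 2 + (-b) by ring, Real.rpow_add (by norm_num)]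
    have : (2:ℝ) ^ (2:ℝ) = 4 := by
      rw [show (2:ℝ) = ((2:ℕ):ℝ) by norm_num, Real.rpow_natCast]; norm_num
    rw [this]
  have e2 : (3:ℝ) ^ (1 - b) = 3 * (3:ℝ) ^ (-b) := aux_rpow_split 3 (by norm_num) b
  -- 2^(-b) ≤ (3/2) * 3^(-b)
  have h32 : ((3:ℝ)/2) ^ b ≤ 3/2 := by
    calc ((3:ℝ)/2)^b ≤ ((3:ℝ)/2)^(1:ℝ) :=
      Real.rpow_le_rpow_of_exponent_le (by norm_num) hb1.le
    _ = 3/2 := Real.rpow_one _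
  have h23 : (2:ℝ) ^ (-b) = (3:ℝ) ^ (-b) * ((3:ℝ)/2) ^ b := by
    rw [Real.div_rpow (by norm_num) (by norm_num), Real.rpow_neg (by norm_num : (0:ℝ) ≤ 3),
      Real.rpow_neg (by norm_num : (0:ℝ) ≤ 2)]
    have h3 : (0:ℝ) < (3:ℝ) ^ b := Real.rpow_pos_of_pos (by norm_num) _
    have h2 : (0:ℝ) < (2:ℝ) ^ b := Real.rpow_pos_of_pos (by norm_num) _
    field_simp
  have hle : (2:ℝ) ^ (-b) * (4 - b) ≤ 6 * (3:ℝ) ^ (-b) := by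
    have : (2:ℝ) ^ (-b) * (4 - b) ≤ ((3:ℝ) ^ (-b) * (3/2)) * 4 := by
      rw [h23]
      apply mul_le_mul
      · exact mul_le_mul_of_nonneg_left h32 h3b.le
      · linarith
      · linarith
      · positivity
    linarith
  have hab : 0 < a * (1 - b) := by nlinarith
  have hc : 1 ≤ a * (1-b) * ((2:ℝ) ^ (-b) * (4 - b)) := by nlinarith [hcond2, e1]
  calc (1:ℝ) ≤ a * (1-b) * ((2:ℝ) ^ (-b) * (4 - b)) := hc
  _ ≤ a * (1-b) * (6 * (3:ℝ) ^ (-b)) := by nlinarith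
  _ = 2 * a * (1 - b) * (3:ℝ) ^ (1 - b) := by rw [e2]; ring

theorem stmt_3 (α : ℕ → ℝ)
    (h1 : α 1 = 1)
    (hrec : ∀ k ≥ 1, α (k + 1) = 2 / (1 + Real.sqrt (1 + 4 / (α k) ^ 2)))
    (a b : ℝ) (ha : 0 < a) (hb0 : 0 < b) (hb1 : b < 1)
    (hcond1 : a * (2 : ℝ) ^ (-b) > Real.sqrt 5 - 2)
    (hcond2 : a * (1 - b) * (2 : ℝ) ^ (2 - b) - a * b * (1 - b) * (2 : ℝ) ^ (-b) - 1 ≥ 0) :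
    ∀ k ≥ 2, α k ≥
      2 / Real.sqrt ((1 + a * (k : ℝ) ^ (-b)) * (k : ℝ) *
        ((1 + a * (k : ℝ) ^ (-b)) * (k : ℝ) + 2)) := by
  set B : ℕ → ℝ := fun n => (1 + a * (n:ℝ) ^ (-b)) * (n:ℝ) with hBdef
  have hBpos : ∀ n : ℕ, 1 ≤ n → (n:ℝ) ≤ B n := by
    intro n hn
    have hn0 : (0:ℝ) < (n:ℝ) := by exact_mod_cast Nat.lt_of_lt_of_le Nat.zero_lt_one hn
    have : (0:ℝ) ≤ a * (n:ℝ) ^ (-b) := by positivity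
    simp only [hBdef]
    nlinarith
  -- key step inequality
  have hstep : ∀ k : ℕ, 2 ≤ k → (B k + 2)^2 + 1 ≤ (B (k+1) + 1)^2 := by
    intro k hk
    have hx : (2:ℝ) ≤ (k:ℝ) := by exact_mod_cast hk
    have hx0 : (0:ℝ) < (k:ℝ) := by linarith
    have hx1 : (0:ℝ) < (k:ℝ) + 1 := by linarith
    have eBk : B k = (k:ℝ) + a * (k:ℝ) ^ (1-b) := by
      simp only [hBdef]
      rw [aux_rpow_split _ hx0]; ring
    have eBk1 : B (k+1) = ((k:ℝ)+1) + a * ((k:ℝ)+1) ^ (1-b) := by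
      simp only [hBdef]
      push_cast
      rw [aux_rpow_split _ hx1]; ring
    have hbern := aux_bernoulli hb0 hb1 hx
    have hmono : (3:ℝ) ^ (1-b) ≤ ((k:ℝ)+1) ^ (1-b) :=
      Real.rpow_le_rpow (by norm_num) (by linarith) (by linarith)
    have hconst := aux_const ha hb0 hb1 hcond2
    have hsplit : ((k:ℝ)+1) ^ (1-b) = ((k:ℝ)+1) * ((k:ℝ)+1) ^ (-b) := aux_rpow_split _ hx1 b
    -- δ := B(k+1) - B k - 1 = a * ((k+1)^(1-b) - k^(1-b)) ≥ a*(1-b)*(k+1)^(-b)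
    have hδ : a * (1-b) * ((k:ℝ)+1) ^ (-b) ≤ B (k+1) - B k - 1 := by
      rw [eBk, eBk1]
      have := mul_le_mul_of_nonneg_left hbern ha.le
      linarith
    have hδ0 : (0:ℝ) < a * (1-b) * ((k:ℝ)+1) ^ (-b) := by
      have h1b : (0:ℝ) < 1 - b := by linarith
      positivity
    have hsum : 2 * (k:ℝ) + 2 ≤ B (k+1) + B k + 3 := by
      have h1 := hBpos k (by omega)
      have h2 := hBpos (k+1) (by omega)
      push_cast at h2
      linarith
    have hprod : 1 ≤ (B (k+1) - B k - 1) * (B (k+1) + B k + 3) := by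
      have e4 : a * (1-b) * ((k:ℝ)+1) ^ (-b) * (2 * (k:ℝ) + 2)
          = 2 * a * (1-b) * ((k:ℝ)+1) ^ (1-b) := by
        rw [hsplit]; ring
      have h5 : 1 ≤ a * (1-b) * ((k:ℝ)+1) ^ (-b) * (2 * (k:ℝ) + 2) := by
        rw [e4]
        calc (1:ℝ) ≤ 2 * a * (1-b) * (3:ℝ)^(1-b) := hconst
        _ ≤ 2 * a * (1-b) * ((k:ℝ)+1) ^ (1-b) := by
          have h2ab : (0:ℝ) ≤ 2*a*(1-b) := by nlinarith
          exact mul_le_mul_of_nonneg_left hmono h2ab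
      calc (1:ℝ) ≤ a * (1-b) * ((k:ℝ)+1) ^ (-b) * (2 * (k:ℝ) + 2) := h5
      _ ≤ (B (k+1) - B k - 1) * (B (k+1) + B k + 3) := by nlinarith
    nlinarith [hprod]
  -- positivity of B
  have hB0 : ∀ n : ℕ, 1 ≤ n → 0 < B n := fun n hn =>
    lt_of_lt_of_le (by exact_mod_cast Nat.lt_of_lt_of_le Nat.zero_lt_one hn) (hBpos n hn)
  -- sqrt 5 facts
  have hs5sq : Real.sqrt 5 ^ 2 = 5 := Real.sq_sqrt (by norm_num)
  have hs5nn : 0 ≤ Real.sqrt 5 := Real.sqrt_nonneg 5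
  have hs5lb : 2 < Real.sqrt 5 := by nlinarith
  have hs5ub : Real.sqrt 5 < 7/3 := by nlinarith
  -- main claim via induction
  suffices H : ∀ k : ℕ, 2 ≤ k → α k ≥ 2 / Real.sqrt (B k * (B k + 2)) by
    intro k hk
    exact H k hk
  intro k hk
  induction k, hk using Nat.le_induction with
  | base =>
    have hα2 : α 2 = 2 / (1 + Real.sqrt 5) := by
      have h2 := hrec 1 le_rfl
      rw [h1] at h2
      norm_num at h2
      exact h2
    have hB2 : B 2 = (1 + a * (2:ℝ) ^ (-b)) * 2 := by
      simp only [hBdef]; norm_num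
    have hB2lb : 2 * Real.sqrt 5 - 2 < B 2 := by rw [hB2]; nlinarith
    have hD2 : (1 + Real.sqrt 5)^2 ≤ B 2 * (B 2 + 2) := by nlinarith
    have hsq : 1 + Real.sqrt 5 ≤ Real.sqrt (B 2 * (B 2 + 2)) := by
      calc 1 + Real.sqrt 5 = Real.sqrt ((1 + Real.sqrt 5)^2) :=
        (Real.sqrt_sq (by linarith)).symm
      _ ≤ Real.sqrt (B 2 * (B 2 + 2)) := Real.sqrt_le_sqrt hD2
    rw [hα2]
    have h15 : (0:ℝ) < 1 + Real.sqrt 5 := by linarith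
    exact div_le_div_of_nonneg_left (by norm_num) h15 hsq
  | succ k hk IH =>
    have hBk := hB0 k (by omega)
    have hBk1 := hB0 (k+1) (by omega)
    have hDk : (0:ℝ) < B k * (B k + 2) := by nlinarith
    have hsDk : (0:ℝ) < Real.sqrt (B k * (B k + 2)) := Real.sqrt_pos.mpr hDk
    have hsDksq : Real.sqrt (B k * (B k + 2)) ^ 2 = B k * (B k + 2) :=
      Real.sq_sqrt hDk.le
    have hmk : (0:ℝ) < 2 / Real.sqrt (B k * (B k + 2)) := by positivity
    have hαk : 0 < α k := lt_of_lt_of_le hmk IH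
    -- 4 / α k ^ 2 ≤ B k * (B k + 2)
    have h4 : 4 / α k ^ 2 ≤ B k * (B k + 2) := by
      have hα2 : 4 / (B k * (B k + 2)) ≤ α k ^ 2 := by
        calc 4 / (B k * (B k + 2)) = (2 / Real.sqrt (B k * (B k + 2)))^2 := by
              rw [div_pow, hsDksq]; norm_num
        _ ≤ α k ^ 2 := pow_le_pow_left₀ hmk.le IH 2
      rw [div_le_iff₀ (by positivity)]
      rw [div_le_iff₀ hDk] at hα2
      rw [mul_comm]; exact hα2
    have hsqrt4 : Real.sqrt (1 + 4 / α k ^ 2) ≤ B k + 1 := by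
      have h6 : 1 + 4 / α k ^ 2 ≤ (B k + 1)^2 := by
        have he : (B k + 1)^2 = B k * (B k + 2) + 1 := by ring
        linarith [h4]
      calc Real.sqrt (1 + 4 / α k ^ 2) ≤ Real.sqrt ((B k + 1)^2) := Real.sqrt_le_sqrt h6
      _ = B k + 1 := Real.sqrt_sq (by linarith)
    have hden : (0:ℝ) < 1 + Real.sqrt (1 + 4 / α k ^ 2) := by
      positivity
    have hαk1 : 2 / (B k + 2) ≤ α (k+1) := by
      rw [hrec k (by omega)]
      apply div_le_div_of_nonneg_left (by norm_num) hden
      linarith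
    -- √(B(k+1)(B(k+1)+2)) ≥ B k + 2
    have hD1 : (B k + 2)^2 ≤ B (k+1) * (B (k+1) + 2) := by
      have h7 := hstep k (by omega)
      have he : (B (k+1) + 1)^2 = B (k+1) * (B (k+1) + 2) + 1 := by ring
      linarith
    have hsq1 : B k + 2 ≤ Real.sqrt (B (k+1) * (B (k+1) + 2)) := by
      calc B k + 2 = Real.sqrt ((B k + 2)^2) := (Real.sqrt_sq (by linarith)).symm
      _ ≤ _ := Real.sqrt_le_sqrt hD1
    have : 2 / Real.sqrt (B (k+1) * (B (k+1) + 2)) ≤ 2 / (B k + 2) :=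
      div_le_div_of_nonneg_left (by norm_num) (by linarith) hsq1
    linarith
end

section
/- Let a > 0, 0 < b < 1, and let t ≥ 1 be a real number such that 2a(1−b)t^{1−b} − ab(1−b)t^{−b} − 1 ≥ 0. Then (1 + a(t+1)^{−b})(t+1)·[(1 + a(t+1)^{−b})(t+1) + 2] ≥ [(1 + a·t^{−b})t + 2]². -/
theorem stmt_4 (a b t : ℝ) (ha : 0 < a) (hb0 : 0 < b) (hb1 : b < 1) (ht : 1 ≤ t)
    (h : 2 * a * (1 - b) * t ^ (1 - b) - a * b * (1 - b) * t ^ (-b) - 1 ≥ 0) :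
    (1 + a * (t + 1) ^ (-b)) * (t + 1) * ((1 + a * (t + 1) ^ (-b)) * (t + 1) + 2) ≥
      ((1 + a * t ^ (-b)) * t + 2) ^ 2 := by
  have ht0 : (0:ℝ) < t := lt_of_lt_of_le one_pos ht
  have ht1 : (0:ℝ) < t + 1 := by linarith
  have h1b : (0:ℝ) < 1 - b := by linarith
  set x := t ^ (-b) with hxdef
  set y := (t + 1) ^ (-b) with hydef
  have hx : 0 < x := Real.rpow_pos_of_pos ht0 _
  have hy : 0 < y := Real.rpow_pos_of_pos ht1 _
  have hpow : t ^ (1 - b) = t * x := by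
    rw [hxdef, show (1 - b) = 1 + (-b) by ring, Real.rpow_add ht0, Real.rpow_one]
  have hpow' : (t + 1) ^ (1 - b) = (t + 1) * y := by
    rw [hydef, show (1 - b) = 1 + (-b) by ring, Real.rpow_add ht1, Real.rpow_one]
  -- hypothesis in algebraic form
  have hHyp : a * (1 - b) * x * (2 * t - b) ≥ 1 := by
    rw [hpow] at h; nlinarith [h]
  -- Step A: (t+1)*y - t*x ≥ (1-b)*y   (concavity of s ↦ s^(1-b))
  have hA : (t + 1) * y - t * x ≥ (1 - b) * y := by
    have hs : (-1:ℝ) ≤ -(1 / (t + 1)) := by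
      rw [neg_le_neg_iff]
      exact div_le_one_of_le₀ (by linarith) (by linarith)
    have hbern := rpow_one_add_le_one_add_mul_self hs (by linarith : (0:ℝ) ≤ 1 - b)
      (by linarith : (1:ℝ) - b ≤ 1)
    have h1 : (1 : ℝ) + -(1 / (t + 1)) = t / (t + 1) := by field_simp; ring
    rw [h1] at hbern
    have h2 : (t / (t + 1)) ^ (1 - b) = t ^ (1 - b) / (t + 1) ^ (1 - b) :=
      Real.div_rpow ht0.le (by linarith : (0:ℝ) ≤ t + 1) (1 - b)
    rw [h2, hpow, hpow'] at hbern
    have hty : 0 < (t + 1) * y := by positivity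
    rw [div_le_iff₀ hty] at hbern
    have h3 : (1 + (1 - b) * -(1 / (t + 1))) * ((t + 1) * y)
        = (t + 1) * y - (1 - b) * y := by field_simp; ring
    rw [h3] at hbern
    linarith
  -- Step B: t * y ≥ (t - b) * x
  have hB : t * y ≥ (t - b) * x := by
    have hm1 : (-1:ℝ) ≤ 1 / t := by
      have : (0:ℝ) < 1 / t := by positivity
      linarith
    have hbern := rpow_one_add_le_one_add_mul_self hm1 hb0.le hb1.le
    have h1 : (1 : ℝ) + 1 / t = (t + 1) / t := by field_simp
    rw [h1] at hbern
    have h2 : ((t + 1) / t) ^ b = (t + 1) ^ b / t ^ b :=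
      Real.div_rpow (by linarith : (0:ℝ) ≤ t + 1) ht0.le b
    rw [h2] at hbern
    have hxb : t ^ b = x⁻¹ := by
      rw [hxdef, ← Real.rpow_neg ht0.le, neg_neg]
    have hyb : (t + 1) ^ b = y⁻¹ := by
      rw [hydef, ← Real.rpow_neg (by linarith : (0:ℝ) ≤ t + 1), neg_neg]
    rw [hxb, hyb] at hbern
    have h3 : y⁻¹ / x⁻¹ = x / y := by
      field_simp
    rw [h3, div_le_iff₀ hy] at hbern
    -- hbern : x ≤ (1 + b * (1/t)) * y
    have h4 : (1 + b * (1 / t)) * y * t = (t + b) * y := by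
      field_simp
    have h5 : x * t ≤ (t + b) * y := by
      calc x * t ≤ (1 + b * (1 / t)) * y * t := by
            apply mul_le_mul_of_nonneg_right hbern ht0.le
        _ = (t + b) * y := h4
    nlinarith [h5, hy, sq_nonneg b]
  set G := (1 + a * x) * t with hGdef
  set H := (1 + a * y) * (t + 1) with hHdef
  set E := a * (1 - b) * y with hEdef
  have hE : 0 < E := by rw [hEdef]; positivity
  have hHG : H ≥ G + 1 + E := by
    have h1 := mul_le_mul_of_nonneg_left hA ha.le
    have hid : H - G - 1 - E = a * ((t + 1) * y - t * x) - a * ((1 - b) * y) := by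
      rw [hHdef, hGdef, hEdef]; ring
    linarith [hid.ge, hid.le, h1]
  -- Key bound : 2 * E * (G + 2) ≥ 1
  have hKey : 2 * E * (G + 2) ≥ 1 := by
    set K := a * (1 - b) * x with hKdef
    have hK : 0 < K := by rw [hKdef]; positivity
    have hu : (0:ℝ) < 2 * t - b := by linarith
    have htb : (0:ℝ) < t - b := by linarith
    have hs : 0 ≤ K * (2 * t - b) - 1 := by linarith [hHyp]
    -- pure polynomial inequality
    have hP : 2 * (t - b) * t + 2 * (t - b) * (t + 2) * (1 - b) * (2 * t - b)
        - t * (1 - b) * (2 * t - b) ^ 2 ≥ 0 := by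
      nlinarith [sq_nonneg (t - 1), sq_nonneg b, mul_pos ht0 hb0, mul_pos htb hb0,
        mul_nonneg (mul_nonneg htb.le h1b.le) hb0.le, sq_nonneg (t - b), mul_pos ht0 h1b]
    have hT1 : 0 ≤ (K * (2 * t - b) - 1) * ((t - b) * (t + 2) * (1 - b) * (2 * t - b)) := by
      apply mul_nonneg hs
      positivity
    have hT2 : 0 ≤ (K * (2 * t - b) - 1) * ((t - b) * t) := by
      apply mul_nonneg hs
      positivity
    have hT3 : 0 ≤ (K * (2 * t - b) - 1) ^ 2 * ((t - b) * t) := by positivity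
    have h2 : 2 * K * (t - b) * (t + 2) * (1 - b) + 2 * K ^ 2 * (t - b) * t
        - t * (1 - b) ≥ 0 := by
      have hsq : (0:ℝ) < (2 * t - b) ^ 2 := by positivity
      have hident : (2 * K * (t - b) * (t + 2) * (1 - b) + 2 * K ^ 2 * (t - b) * t
          - t * (1 - b)) * (2 * t - b) ^ 2
          = (2 * (t - b) * t + 2 * (t - b) * (t + 2) * (1 - b) * (2 * t - b)
            - t * (1 - b) * (2 * t - b) ^ 2)
            + 2 * ((K * (2 * t - b) - 1) * ((t - b) * (t + 2) * (1 - b) * (2 * t - b)))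
            + 4 * ((K * (2 * t - b) - 1) * ((t - b) * t))
            + 2 * ((K * (2 * t - b) - 1) ^ 2 * ((t - b) * t)) := by ring
      have hnn : 0 ≤ (2 * K * (t - b) * (t + 2) * (1 - b) + 2 * K ^ 2 * (t - b) * t
          - t * (1 - b)) * (2 * t - b) ^ 2 := by
        rw [hident]; linarith [hP, hT1, hT2, hT3]
      have h0 : (0:ℝ) * (2 * t - b) ^ 2 ≤ (2 * K * (t - b) * (t + 2) * (1 - b)
          + 2 * K ^ 2 * (t - b) * t - t * (1 - b)) * (2 * t - b) ^ 2 := by linarith [hnn]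
      linarith [le_of_mul_le_mul_right h0 hsq]
    -- cancel the factor (1 - b)
    have h3 : 2 * a * (1 - b) * ((t - b) * x) * (t + a * x * t + 2) * (1 - b)
        ≥ t * (1 - b) := by
      have hid : 2 * a * (1 - b) * ((t - b) * x) * (t + a * x * t + 2) * (1 - b)
          = 2 * K * (t - b) * (t + 2) * (1 - b) + 2 * K ^ 2 * (t - b) * t := by
        rw [hKdef]; ring
      linarith [hid.ge, hid.le, h2]
    have h4 : 2 * a * (1 - b) * ((t - b) * x) * (t + a * x * t + 2) ≥ t :=
      le_of_mul_le_mul_right (by linarith [h3]) h1b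
    -- use t*y ≥ (t-b)*x
    have hc : (0:ℝ) ≤ 2 * a * (1 - b) * (t + a * x * t + 2) := by positivity
    have h5 := mul_le_mul_of_nonneg_left hB hc
    have hid2 : 2 * a * (1 - b) * (t + a * x * t + 2) * (t * y) = 2 * E * (G + 2) * t := by
      rw [hEdef, hGdef]; ring
    have h6 : 2 * E * (G + 2) * t ≥ t := by linarith [h5, h4, hid2.ge, hid2.le]
    have : (1:ℝ) * t ≤ 2 * E * (G + 2) * t := by linarith [h6]
    exact le_of_mul_le_mul_right this ht0
  have hG0 : 0 < G := by rw [hGdef]; positivity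
  have hprod : 0 ≤ (H - G - 1 - E) * (H + G + 3 + E) := by
    apply mul_nonneg
    · linarith [hHG]
    · linarith [hHG, hG0, hE]
  have hfinal : H * (H + 2) - (G + 2) ^ 2
      = (H - G - 1 - E) * (H + G + 3 + E) + (2 * E * (G + 2) - 1) + E ^ 2 := by ring
  have hE2 : 0 ≤ E ^ 2 := sq_nonneg E
  linarith [hfinal.ge, hfinal.le, hprod, hKey, hE2]
end

section
/- Let (α_k)_{k≥1} be real numbers with α_1 = 1, 0 < α_k < 1 for all k ≥ 2, and α_{k+1} ≤ 2/(1 + √(1 + 4/α_k²)) for all k ≥ 1. Define Γ_1 = 1 and Γ_k = (1 − α_k)Γ_{k−1} for k ≥ 2. Then for every N ≥ 1 and all nonnegative constants C_1, C_2, one has (Σ_{k=1}^N Γ_k^{−1})^{−1}·C_1 + (Σ_{k=1}^N Γ_N/Γ_k)^{−1}·C_2 ≤ C_1/N + 3C_2/(N + 2); in particular the left-hand side is O(1/N). -/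
private lemma sum_k_kp1 (N : ℕ) :
    ∑ k ∈ Finset.Icc 1 N, (k : ℝ) * ((k : ℝ) + 1) = (N : ℝ) * ((N : ℝ) + 1) * ((N : ℝ) + 2) / 3 := by
  induction N with
  | zero => simp
  | succ n ih =>
    rw [Finset.sum_Icc_succ_top (by omega), ih]
    push_cast; ring

theorem stmt_8 (α Γ : ℕ → ℝ)
    (hα1 : α 1 = 1)
    (hαpos : ∀ k ≥ 2, 0 < α k) (hαlt : ∀ k ≥ 2, α k < 1)
    (hrec : ∀ k ≥ 1, α (k + 1) ≤ 2 / (1 + Real.sqrt (1 + 4 / (α k) ^ 2)))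
    (hΓ1 : Γ 1 = 1) (hΓ : ∀ k ≥ 2, Γ k = (1 - α k) * Γ (k - 1)) :
    ∀ N ≥ 1, ∀ C₁ C₂ : ℝ, 0 ≤ C₁ → 0 ≤ C₂ →
      (∑ k ∈ Finset.Icc 1 N, (Γ k)⁻¹)⁻¹ * C₁ + (∑ k ∈ Finset.Icc 1 N, Γ N / Γ k)⁻¹ * C₂ ≤
        C₁ / (N : ℝ) + 3 * C₂ / ((N : ℝ) + 2) := by
  have hαpos' : ∀ k, 1 ≤ k → 0 < α k := by
    intro k hk
    rcases Nat.lt_or_ge k 2 with h | h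
    · interval_cases k
      · rw [hα1]; norm_num
    · exact hαpos k h
  -- α k ≤ 2/(k+1)
  have hbound : ∀ k, 1 ≤ k → α k ≤ 2 / ((k : ℝ) + 1) := by
    intro k hk
    induction k with
    | zero => omega
    | succ n ih =>
      rcases Nat.lt_or_ge n 1 with h | h
      · interval_cases n
        · rw [hα1]; norm_num
      · have hn := ih h
        have hαn := hαpos' n h
        have hna : (0 : ℝ) < (n : ℝ) + 1 := by positivity
        have h2 : ((n : ℝ) + 1) * α n ≤ 2 := by
          rw [le_div_iff₀ hna] at hn; linarith
        have h3 : ((n : ℝ) + 1) ^ 2 ≤ 4 / (α n) ^ 2 := by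
          rw [le_div_iff₀ (by positivity)]
          nlinarith [mul_nonneg hna.le hαn.le]
        have h1 : (n : ℝ) + 1 ≤ Real.sqrt (1 + 4 / (α n) ^ 2) := by
          rw [show ((n : ℝ) + 1) = Real.sqrt (((n : ℝ) + 1) ^ 2) from (Real.sqrt_sq hna.le).symm]
          apply Real.sqrt_le_sqrt; linarith
        have hrec' := hrec n h
        have h4 : 2 / (1 + Real.sqrt (1 + 4 / (α n) ^ 2)) ≤ 2 / ((n : ℝ) + 2) := by
          apply div_le_div_of_nonneg_left (by norm_num) (by positivity)
          linarith
        have : α (n + 1) ≤ 2 / ((n : ℝ) + 2) := le_trans hrec' h4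
        push_cast
        convert this using 2
        ring
  -- 0 < Γ k ≤ 1
  have hΓfact : ∀ k, 1 ≤ k → 0 < Γ k ∧ Γ k ≤ 1 := by
    intro k hk
    induction k with
    | zero => omega
    | succ n ih =>
      rcases Nat.lt_or_ge n 1 with h | h
      · interval_cases n
        · rw [hΓ1]; norm_num
      · obtain ⟨hp, hl⟩ := ih h
        have h2 : n + 1 ≥ 2 := by omega
        have hrw := hΓ (n + 1) h2
        simp only [Nat.add_sub_cancel] at hrw
        have ha1 := hαpos (n + 1) h2
        have ha2 := hαlt (n + 1) h2
        constructor
        · rw [hrw]; exact mul_pos (by linarith) hp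
        · rw [hrw]; nlinarith
  -- monotonicity of k(k+1)Γ k
  have hg : ∀ k : ℕ, 1 ≤ k → ∀ N : ℕ, k ≤ N →
      (k : ℝ) * ((k : ℝ) + 1) * Γ k ≤ (N : ℝ) * ((N : ℝ) + 1) * Γ N := by
    intro k hk N hN
    induction N with
    | zero => omega
    | succ n ih =>
      rcases Nat.lt_or_ge n k with h | h
      · have hkn : k = n + 1 := by omega
        subst hkn; exact le_refl _
      · have hkn := ih h
        have hn1 : 1 ≤ n := le_trans hk h
        have h2 : n + 1 ≥ 2 := by omega
        have hrw := hΓ (n + 1) h2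
        simp only [Nat.add_sub_cancel] at hrw
        have hb := hbound (n + 1) (by omega)
        have hp := (hΓfact n hn1).1
        have hb' : ((n : ℝ) + 2) * α (n + 1) ≤ 2 := by
          push_cast at hb
          rw [le_div_iff₀ (by positivity)] at hb
          linarith
        have key : (n : ℝ) * ((n : ℝ) + 1) * Γ n ≤
            ((n : ℝ) + 1) * ((n : ℝ) + 2) * Γ (n + 1) := by
          rw [hrw]
          nlinarith [mul_nonneg (mul_nonneg (show (0:ℝ) ≤ (n:ℝ) + 1 by positivity)
            (show (0:ℝ) ≤ 2 - ((n:ℝ) + 2) * α (n + 1) by linarith)) hp.le]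
        push_cast
        linarith
  intro N hN C₁ C₂ hC₁ hC₂
  have hN1 : (1 : ℝ) ≤ (N : ℝ) := by exact_mod_cast hN
  -- first sum ≥ N
  have hS1 : (N : ℝ) ≤ ∑ k ∈ Finset.Icc 1 N, (Γ k)⁻¹ := by
    have : ∑ k ∈ Finset.Icc 1 N, (1 : ℝ) = (N : ℝ) := by
      rw [Finset.sum_const, Nat.card_Icc]
      simp
    rw [← this]
    apply Finset.sum_le_sum
    intro i hi
    rw [Finset.mem_Icc] at hi
    obtain ⟨hp, hl⟩ := hΓfact i hi.1
    exact (one_le_inv₀ hp).mpr hl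
  -- second sum ≥ (N+2)/3
  have hS2 : ((N : ℝ) + 2) / 3 ≤ ∑ k ∈ Finset.Icc 1 N, Γ N / Γ k := by
    have hNN : (0 : ℝ) < (N : ℝ) * ((N : ℝ) + 1) := by positivity
    have heq : ∑ k ∈ Finset.Icc 1 N, (k : ℝ) * ((k : ℝ) + 1) / ((N : ℝ) * ((N : ℝ) + 1)) =
        ((N : ℝ) + 2) / 3 := by
      rw [← Finset.sum_div, sum_k_kp1]
      field_simp
    rw [← heq]
    apply Finset.sum_le_sum
    intro i hi
    rw [Finset.mem_Icc] at hi
    have hΓi := (hΓfact i hi.1).1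
    rw [div_le_div_iff₀ hNN hΓi]
    have := hg i hi.1 N hi.2
    linarith
  have hS1pos : (0 : ℝ) < ∑ k ∈ Finset.Icc 1 N, (Γ k)⁻¹ := lt_of_lt_of_le (by linarith) hS1
  have hS2pos : (0 : ℝ) < ∑ k ∈ Finset.Icc 1 N, Γ N / Γ k :=
    lt_of_lt_of_le (by linarith) hS2
  have h1 : (∑ k ∈ Finset.Icc 1 N, (Γ k)⁻¹)⁻¹ ≤ ((N : ℝ))⁻¹ :=
    inv_anti₀ (by linarith) hS1
  have h2 : (∑ k ∈ Finset.Icc 1 N, Γ N / Γ k)⁻¹ ≤ (((N : ℝ) + 2) / 3)⁻¹ :=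
    inv_anti₀ (by linarith) hS2
  have e : ((N : ℝ))⁻¹ * C₁ + (((N : ℝ) + 2) / 3)⁻¹ * C₂ =
      C₁ / (N : ℝ) + 3 * C₂ / ((N : ℝ) + 2) := by
    field_simp
  calc (∑ k ∈ Finset.Icc 1 N, (Γ k)⁻¹)⁻¹ * C₁ + (∑ k ∈ Finset.Icc 1 N, Γ N / Γ k)⁻¹ * C₂
      ≤ ((N : ℝ))⁻¹ * C₁ + (((N : ℝ) + 2) / 3)⁻¹ * C₂ := by
        gcongr
    _ = C₁ / (N : ℝ) + 3 * C₂ / ((N : ℝ) + 2) := e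
end

section
/- Let (α_k)_{k≥1} be real numbers with 0 < α_k < 1 and α_k ≤ 2/(k+1) for all k ≥ 2, and define Γ_1 = 1 and Γ_k = (1 − α_k)Γ_{k−1} for k ≥ 2. Then for every N ≥ 1, Σ_{k=1}^N Γ_N/Γ_k ≥ (N + 2)/3. -/
theorem stmt_10 (α Γ : ℕ → ℝ)
    (hαpos : ∀ k ≥ 2, 0 < α k) (hαlt : ∀ k ≥ 2, α k < 1)
    (hαle : ∀ k ≥ 2, α k ≤ 2 / ((k : ℝ) + 1))
    (hΓ1 : Γ 1 = 1) (hΓ : ∀ k ≥ 2, Γ k = (1 - α k) * Γ (k - 1)) :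
    ∀ N ≥ 1, ∑ k ∈ Finset.Icc 1 N, Γ N / Γ k ≥ ((N : ℝ) + 2) / 3 := by
  have hΓpos : ∀ k, 1 ≤ k → 0 < Γ k := by
    intro k hk
    induction k, hk using Nat.le_induction with
    | base => rw [hΓ1]; norm_num
    | succ n hn ih =>
      have h := hΓ (n + 1) (by omega)
      simp only [Nat.add_sub_cancel] at h
      rw [h]
      exact mul_pos (by linarith [hαlt (n + 1) (by omega)]) ih
  have key : ∀ k, 1 ≤ k → ∀ n, k ≤ n →
      Γ k * ((k : ℝ) * ((k : ℝ) + 1)) ≤ Γ n * ((n : ℝ) * ((n : ℝ) + 1)) := by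
    intro k hk n hn
    induction n, hn using Nat.le_induction with
    | base => exact le_rfl
    | succ n hn ih =>
      have h1 : 1 ≤ n := le_trans hk hn
      have hΓn := hΓpos n h1
      have hα := hαle (n + 1) (by omega)
      have hrec := hΓ (n + 1) (by omega)
      simp only [Nat.add_sub_cancel] at hrec
      push_cast at hα ⊢
      have hpos : (0 : ℝ) < (n : ℝ) + 2 := by positivity
      have h2 : α (n + 1) * ((n : ℝ) + 2) ≤ 2 := by
        rw [le_div_iff₀ (by linarith)] at hα; linarith
      refine le_trans ih ?_
      rw [hrec]
      nlinarith [mul_nonneg (mul_nonneg hΓn.le (by linarith : (0:ℝ) ≤ (n:ℝ) + 1))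
        (by linarith : (0:ℝ) ≤ 2 - α (n + 1) * ((n : ℝ) + 2))]
  have sum_id : ∀ N : ℕ, ∑ k ∈ Finset.Icc 1 N, ((k : ℝ) * ((k : ℝ) + 1))
      = (N : ℝ) * ((N : ℝ) + 1) * ((N : ℝ) + 2) / 3 := by
    intro N
    induction N with
    | zero => simp
    | succ n ih =>
      rw [Finset.sum_Icc_succ_top (by omega), ih]
      push_cast
      ring
  intro N hN
  have hNpos : (0 : ℝ) < (N : ℝ) * ((N : ℝ) + 1) := by
    have : (1 : ℝ) ≤ (N : ℝ) := by exact_mod_cast hN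
    nlinarith
  have hterm : ∀ k ∈ Finset.Icc 1 N,
      (k : ℝ) * ((k : ℝ) + 1) / ((N : ℝ) * ((N : ℝ) + 1)) ≤ Γ N / Γ k := by
    intro k hk
    simp only [Finset.mem_Icc] at hk
    rw [div_le_div_iff₀ hNpos (hΓpos k hk.1)]
    have := key k hk.1 N hk.2
    nlinarith [this]
  calc ∑ k ∈ Finset.Icc 1 N, Γ N / Γ k
      ≥ ∑ k ∈ Finset.Icc 1 N, (k : ℝ) * ((k : ℝ) + 1) / ((N : ℝ) * ((N : ℝ) + 1)) :=
        Finset.sum_le_sum hterm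
    _ = (∑ k ∈ Finset.Icc 1 N, (k : ℝ) * ((k : ℝ) + 1)) / ((N : ℝ) * ((N : ℝ) + 1)) := by
        rw [Finset.sum_div]
    _ = ((N : ℝ) + 2) / 3 := by
        rw [sum_id]
        field_simp
end

section
/- Let N ≥ 1 and let (α_k)_{k≥1} be real numbers with α_1 = 1, 0 < α_k < 1 for k ≥ 2, and α_{k+1} ≤ 2/(1 + √(1 + 4/α_k²)) for all k ≥ 1; define Γ_1 = 1 and Γ_k = (1 − α_k)Γ_{k−1} for k ≥ 2. Then 0 < (Γ_N·Σ_{k=1}^N 1/Γ_k)^{−1} ≤ (1/N)·Π_{k=2}^N (1 − α_k)^{−k/N}. -/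
theorem stmt_19 (α Γ : ℕ → ℝ) (N : ℕ) (hN : 1 ≤ N)
    (hα1 : α 1 = 1)
    (hαpos : ∀ k ≥ 2, 0 < α k) (hαlt : ∀ k ≥ 2, α k < 1)
    (hrec : ∀ k ≥ 1, α (k + 1) ≤ 2 / (1 + Real.sqrt (1 + 4 / (α k) ^ 2)))
    (hΓ1 : Γ 1 = 1) (hΓ : ∀ k ≥ 2, Γ k = (1 - α k) * Γ (k - 1)) :
    0 < (Γ N * ∑ k ∈ Finset.Icc 1 N, (Γ k)⁻¹)⁻¹ ∧
    (Γ N * ∑ k ∈ Finset.Icc 1 N, (Γ k)⁻¹)⁻¹ ≤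
      (1 / (N : ℝ)) * ∏ k ∈ Finset.Icc 2 N, (1 - α k) ^ (-(k : ℝ) / (N : ℝ)) := by
  have hcp : ∀ j, 2 ≤ j → 0 < 1 - α j := fun j hj => by have := hαlt j hj; linarith
  have hc1 : ∀ j, 2 ≤ j → 1 - α j ≤ 1 := fun j hj => by have := hαpos j hj; linarith
  have hΓprod : ∀ k, 1 ≤ k → Γ k = ∏ j ∈ Finset.Icc 2 k, (1 - α j) := by
    intro k hk
    induction k with
    | zero => omega
    | succ n ih =>
      rcases Nat.lt_or_ge n 1 with h | h
      · interval_cases n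
        simpa using hΓ1
      · have h2 : 2 ≤ n + 1 := by omega
        rw [hΓ (n + 1) h2, Finset.prod_Icc_succ_top h2]
        simp only [Nat.add_sub_cancel]
        rw [ih h, mul_comm]
  have hΓpos : ∀ k, 1 ≤ k → 0 < Γ k := by
    intro k hk
    rw [hΓprod k hk]
    exact Finset.prod_pos fun j hj => hcp j (Finset.mem_Icc.mp hj).1
  have hΓN : 0 < Γ N := hΓpos N hN
  have hS : 0 < ∑ k ∈ Finset.Icc 1 N, (Γ k)⁻¹ :=
    Finset.sum_pos (fun k hk => inv_pos.mpr (hΓpos k (Finset.mem_Icc.mp hk).1))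
      ⟨1, Finset.mem_Icc.mpr ⟨le_refl 1, hN⟩⟩
  have hNpos : (0:ℝ) < N := by exact_mod_cast hN
  refine ⟨by positivity, ?_⟩
  -- z k = Γ N / Γ k
  set z : ℕ → ℝ := fun k => Γ N * (Γ k)⁻¹ with hz
  have hzpos : ∀ k ∈ Finset.Icc 1 N, 0 < z k := fun k hk =>
    mul_pos hΓN (inv_pos.mpr (hΓpos k (Finset.mem_Icc.mp hk).1))
  have hcard : (Finset.Icc 1 N).card = N := by simp
  have hAMGM := Real.geom_mean_le_arith_mean_weighted (Finset.Icc 1 N)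
      (fun _ => 1/(N:ℝ)) z (fun i _ => by positivity)
      (by rw [Finset.sum_const, hcard, nsmul_eq_mul]; field_simp)
      (fun k hk => (hzpos k hk).le)
  set G : ℝ := ∏ k ∈ Finset.Icc 1 N, z k ^ ((1:ℝ)/(N:ℝ)) with hG
  have hGpos : 0 < G :=
    Finset.prod_pos fun k hk => Real.rpow_pos_of_pos (hzpos k hk) _
  have hsum : ∑ k ∈ Finset.Icc 1 N, (1/(N:ℝ)) * z k = (1/(N:ℝ)) * (Γ N * ∑ k ∈ Finset.Icc 1 N, (Γ k)⁻¹) := by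
    simp only [hz, Finset.mul_sum]
  have hkey : (N:ℝ) * G ≤ Γ N * ∑ k ∈ Finset.Icc 1 N, (Γ k)⁻¹ := by
    have := hAMGM
    rw [hsum] at this
    calc (N:ℝ) * G ≤ (N:ℝ) * ((1/(N:ℝ)) * (Γ N * ∑ k ∈ Finset.Icc 1 N, (Γ k)⁻¹)) :=
          mul_le_mul_of_nonneg_left this hNpos.le
      _ = Γ N * ∑ k ∈ Finset.Icc 1 N, (Γ k)⁻¹ := by field_simp
  have hstep1 : (Γ N * ∑ k ∈ Finset.Icc 1 N, (Γ k)⁻¹)⁻¹ ≤ (1/(N:ℝ)) * G⁻¹ :=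
    calc (Γ N * ∑ k ∈ Finset.Icc 1 N, (Γ k)⁻¹)⁻¹ ≤ ((N:ℝ) * G)⁻¹ :=
          inv_anti₀ (by positivity) hkey
      _ = (1/(N:ℝ)) * G⁻¹ := by rw [mul_inv]; ring
  refine hstep1.trans (mul_le_mul_of_nonneg_left ?_ (by positivity))
  -- now show G⁻¹ ≤ ∏ (1 - α k) ^ (-(k:ℝ)/N)
  have hGinv : G⁻¹ = ∏ k ∈ Finset.Icc 1 N, (Γ k * (Γ N)⁻¹) ^ ((1:ℝ)/(N:ℝ)) := by
    rw [hG, ← Finset.prod_inv_distrib]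
    refine Finset.prod_congr rfl fun k hk => ?_
    rw [← Real.inv_rpow (hzpos k hk).le]
    congr 1
    rw [hz]
    simp only []
    rw [mul_inv, inv_inv, mul_comm]
  -- Γ k * (Γ N)⁻¹ = ∏_{j ∈ Ioc k N} (1 - α j)⁻¹
  have hratio : ∀ k ∈ Finset.Icc 1 N, Γ k * (Γ N)⁻¹ = ∏ j ∈ Finset.Ioc k N, (1 - α j)⁻¹ := by
    intro k hk
    obtain ⟨hk1, hkN⟩ := Finset.mem_Icc.mp hk
    have hsplit : (∏ j ∈ Finset.Ioc 1 k, (1 - α j)) * ∏ j ∈ Finset.Ioc k N, (1 - α j)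
        = ∏ j ∈ Finset.Ioc 1 N, (1 - α j) := Finset.prod_Ioc_consecutive _ hk1 hkN
    have e1 : Γ k = ∏ j ∈ Finset.Ioc 1 k, (1 - α j) := by
      rw [hΓprod k hk1, ← Finset.Icc_add_one_left_eq_Ioc]; rfl
    have e2 : Γ N = ∏ j ∈ Finset.Ioc 1 N, (1 - α j) := by
      rw [hΓprod N hN, ← Finset.Icc_add_one_left_eq_Ioc]; rfl
    have hposA : 0 < ∏ j ∈ Finset.Ioc 1 k, (1 - α j) :=
      Finset.prod_pos fun j hj => hcp j (by have := (Finset.mem_Ioc.mp hj).1; omega)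
    rw [e1, e2, ← hsplit, Finset.prod_inv_distrib, mul_inv, ← mul_assoc,
      mul_inv_cancel₀ hposA.ne', one_mul]
  have hGinv2 : G⁻¹ = ∏ k ∈ Finset.Icc 1 N, ∏ j ∈ Finset.Ioc k N,
      ((1 - α j)⁻¹) ^ ((1:ℝ)/(N:ℝ)) := by
    rw [hGinv]
    refine Finset.prod_congr rfl fun k hk => ?_
    rw [hratio k hk]
    refine (Real.finset_prod_rpow _ _ (fun j hj => ?_) _).symm
    have h1 := (Finset.mem_Ioc.mp hj).1
    have h2 := (Finset.mem_Icc.mp hk).1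
    exact inv_nonneg.mpr (hcp j (by omega)).le
  rw [hGinv2]
  -- swap the double product
  have hswap : ∏ k ∈ Finset.Icc 1 N, ∏ j ∈ Finset.Ioc k N, ((1 - α j)⁻¹) ^ ((1:ℝ)/(N:ℝ))
      = ∏ j ∈ Finset.Icc 2 N, ∏ _k ∈ Finset.Icc 1 (j-1), ((1 - α j)⁻¹) ^ ((1:ℝ)/(N:ℝ)) := by
    refine Finset.prod_comm' ?_
    intro k j
    simp only [Finset.mem_Icc, Finset.mem_Ioc]
    omega
  rw [hswap]
  refine Finset.prod_le_prod (fun j hj => ?_) (fun j hj => ?_)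
  · exact Finset.prod_nonneg fun _ _ =>
      Real.rpow_nonneg (inv_nonneg.mpr (hcp j (Finset.mem_Icc.mp hj).1).le) _
  · obtain ⟨hj2, hjN⟩ := Finset.mem_Icc.mp hj
    have hcpos := hcp j hj2
    have hcle := hc1 j hj2
    rw [Finset.prod_const, Nat.card_Icc]
    have hcast : ((j - 1 + 1 - 1 : ℕ) : ℝ) = (j:ℝ) - 1 := by
      have : (j - 1 + 1 - 1 : ℕ) = j - 1 := by omega
      rw [this]
      push_cast [Nat.cast_sub (by omega : 1 ≤ j)]
      ring
    rw [← Real.rpow_natCast (((1 - α j)⁻¹) ^ ((1:ℝ)/(N:ℝ))), ← Real.rpow_mul (by positivity),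
      Real.inv_rpow hcpos.le, ← Real.rpow_neg hcpos.le, hcast]
    refine Real.rpow_le_rpow_of_exponent_ge hcpos hcle ?_
    have h : (1/(N:ℝ)) * ((j:ℝ)-1) ≤ (j:ℝ)/(N:ℝ) := by
      rw [one_div, inv_mul_eq_div]
      gcongr
      linarith
    rw [neg_div]
    exact neg_le_neg h
end
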